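/- arXiv:1911.03788 — 4 statements merged into one kernel-verified Lean document; each statement's English description precedes it below -/
import Mathlib

section
/- Under hypotheses (H1) and (H2), setting θ = min{q₂, β}, the modified nonlinearity satisfies 0 < θ·F̄(t,x) ≤ ⟨∇F̄(t,x), x⟩ for all x ∈ ℝ^N with x ≠ 0 and a.e. t ∈ [0,T], where ∇F̄ denotes the gradient of F̄ in the second variable. -/
open MeasureTheory Set Real
open scoped RealInnerProductSpace

lemma hasFDerivAt_norm' {E : Type*} [NormedAddCommGroup E] [InnerProductSpace ℝ E]
    (x : E) (hx : x ≠ 0) :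
    HasFDerivAt (fun y : E => ‖y‖) (‖x‖⁻¹ • innerSL ℝ x) x := by
  have hsq : HasFDerivAt (fun y : E => ‖y‖ ^ 2) (2 • (innerSL ℝ x)) x :=
    (hasStrictFDerivAt_norm_sq x).hasFDerivAt
  have hne : (‖x‖ : ℝ) ^ 2 ≠ 0 := pow_ne_zero _ (norm_ne_zero_iff.mpr hx)
  have hnx : (0:ℝ) < ‖x‖ := norm_pos_iff.mpr hx
  have h := hsq.sqrt hne
  have heq : (fun y : E => √(‖y‖ ^ 2)) = fun y : E => ‖y‖ := by
    funext y; rw [Real.sqrt_sq (norm_nonneg y)]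
  rw [heq] at h
  convert h using 1
  rw [Real.sqrt_sq (norm_nonneg x)]
  ext v
  simp only [ContinuousLinearMap.smul_apply, smul_eq_mul, two_smul,
    ContinuousLinearMap.add_apply]
  field_simp
  ring

set_option maxHeartbeats 1000000 in
/-- Under hypotheses (H1) and (H2), setting `θ = min{q₂, β}`, the modified
nonlinearity satisfies `0 < θ·F̄(t,x) ≤ ⟨∇F̄(t,x), x⟩` for all `x ≠ 0` and a.e. `t ∈ [0,T]`. -/
theorem truncated_nonlinearity_AR_condition
    (T : ℝ) (hT : 0 < T) (N : ℕ) (hN : 0 < N) (p : ℕ) (hp : 1 < p)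
    (δ : ℝ) (hδ : 0 < δ)
    (F : ℝ → EuclideanSpace ℝ (Fin N) → ℝ)
    (hFdiff : ∀ᵐ t ∂(volume.restrict (Icc 0 T)), ContDiff ℝ 1 (F t))
    (hFmeas : ∀ x : EuclideanSpace ℝ (Fin N), Measurable (fun t => F t x))
    (m : ℝ → ℝ) (hm : ContDiff ℝ 1 m)
    (hm01 : ∀ s, m s ∈ Icc (0:ℝ) 1)
    (hmeven : ∀ s, m (-s) = m s)
    (hmderiv : ∀ s, s * deriv m s ≤ 0)
    (hm1 : ∀ s, |s| ≤ δ / 2 → m s = 1)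
    (hm0 : ∀ s, δ ≤ |s| → m s = 0)
    (q₁ q₂ M₁ M₂ : ℝ)
    (hq₁ : ((p : ℝ)) ^ 2 < q₁) (hq₂ : q₂ ∈ Ioo (((p : ℝ)) ^ 2) q₁)
    (hM₁ : 0 < M₁) (hM₂ : 0 < M₂)
    (hH1 : ∀ᵐ t ∂(volume.restrict (Icc 0 T)),
      ∀ x : EuclideanSpace ℝ (Fin N), ‖x‖ ≤ δ →
        M₁ * ‖x‖ ^ q₁ ≤ F t x ∧ F t x ≤ M₂ * ‖x‖ ^ q₂)
    (β : ℝ) (hβ : ((p : ℝ)) ^ 2 < β)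
    (hH2 : ∀ᵐ t ∂(volume.restrict (Icc 0 T)),
      ∀ x : EuclideanSpace ℝ (Fin N), ‖x‖ ≤ δ →
        0 ≤ β * F t x ∧ β * F t x ≤ ⟪gradient (F t) x, x⟫)
    (Fbar : ℝ → EuclideanSpace ℝ (Fin N) → ℝ)
    (hFbar : ∀ t x, Fbar t x = m ‖x‖ * F t x + (1 - m ‖x‖) * M₂ * ‖x‖ ^ q₂)
    (θ : ℝ) (hθ : θ = min q₂ β) :
    ∀ᵐ t ∂(volume.restrict (Icc 0 T)),
      ∀ x : EuclideanSpace ℝ (Fin N), x ≠ 0 →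
        0 < θ * Fbar t x ∧ θ * Fbar t x ≤ ⟪gradient (Fbar t) x, x⟫ := by
  -- basic positivity of exponents
  have hpsq : (0:ℝ) ≤ ((p:ℝ))^2 := sq_nonneg _
  have hq₂pos : 0 < q₂ := lt_of_le_of_lt hpsq hq₂.1
  have hβpos : 0 < β := lt_of_le_of_lt hpsq hβ
  have hθpos : 0 < θ := by rw [hθ]; exact lt_min hq₂pos hβpos
  have hθq₂ : θ ≤ q₂ := by rw [hθ]; exact min_le_left _ _
  have hθβ : θ ≤ β := by rw [hθ]; exact min_le_right _ _
  filter_upwards [hFdiff, hH1, hH2] with t hdF h1 h2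
  intro x hx0
  set n : ℝ := ‖x‖ with hn_def
  have hn : 0 < n := norm_pos_iff.mpr hx0
  -- derivative of the norm
  have hu : HasFDerivAt (fun y : EuclideanSpace ℝ (Fin N) => ‖y‖) (n⁻¹ • innerSL ℝ x) x :=
    hasFDerivAt_norm' x hx0
  set u : EuclideanSpace ℝ (Fin N) →L[ℝ] ℝ := n⁻¹ • innerSL ℝ x with hu_def
  have hux : u x = n := by
    simp only [hu_def, ContinuousLinearMap.smul_apply, innerSL_apply_apply, smul_eq_mul]
    rw [real_inner_self_eq_norm_sq]
    field_simp [hn_def]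
    ring
  -- derivative of m ∘ norm
  have hmd : HasDerivAt m (deriv m n) n :=
    ((hm.differentiable one_ne_zero) n).hasDerivAt
  have h1c : HasFDerivAt (fun y : EuclideanSpace ℝ (Fin N) => m ‖y‖)
      ((deriv m n) • u) x := hmd.comp_hasFDerivAt x hu
  -- derivative of ‖·‖ ^ q₂
  have h3 : HasFDerivAt (fun y : EuclideanSpace ℝ (Fin N) => ‖y‖ ^ q₂)
      ((q₂ * n ^ (q₂ - 1)) • u) x :=
    by have := (Real.hasDerivAt_rpow_const (p := q₂) (Or.inl hn.ne')).comp_hasFDerivAt x hu; exact this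
  -- derivative of F t
  have hF' : HasFDerivAt (F t) (fderiv ℝ (F t) x) x :=
    ((hdF.differentiable one_ne_zero) x).hasFDerivAt
  -- assemble
  have hA := h1c.mul hF'
  have hB := ((h1c.const_sub 1).mul_const M₂).mul h3
  have hFBfun : Fbar t = fun y => m ‖y‖ * F t y + (1 - m ‖y‖) * M₂ * ‖y‖ ^ q₂ :=
    funext (hFbar t)
  have hFB : HasFDerivAt (Fbar t)
      ((m n • fderiv ℝ (F t) x + F t x • ((deriv m n) • u)) +
        (((1 - m n) * M₂) • ((q₂ * n ^ (q₂ - 1)) • u) +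
          (n ^ q₂) • (M₂ • (-((deriv m n) • u))))) x := by
    rw [hFBfun]; exact hA.add hB
  -- inner products with the gradient
  have hgradF : ⟪gradient (F t) x, x⟫ = fderiv ℝ (F t) x x := by
    rw [show gradient (F t) x
        = (InnerProductSpace.toDual ℝ (EuclideanSpace ℝ (Fin N))).symm (fderiv ℝ (F t) x)
        from rfl]
    exact InnerProductSpace.toDual_symm_apply
  set I : ℝ := fderiv ℝ (F t) x x with hI_def
  set c : ℝ := deriv m n * n with hc_def
  have hrpow : n ^ (q₂ - 1) * n = n ^ q₂ := by
    rw [← Real.rpow_add_one hn.ne', sub_add_cancel]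
  have hgrad : ⟪gradient (Fbar t) x, x⟫
      = m n * I + c * (F t x - M₂ * n ^ q₂) + (1 - m n) * M₂ * q₂ * n ^ q₂ := by
    rw [show gradient (Fbar t) x
        = (InnerProductSpace.toDual ℝ (EuclideanSpace ℝ (Fin N))).symm (fderiv ℝ (Fbar t) x)
        from rfl, hFB.fderiv]
    rw [InnerProductSpace.toDual_symm_apply]
    simp only [ContinuousLinearMap.add_apply, ContinuousLinearMap.smul_apply,
      ContinuousLinearMap.neg_apply, smul_eq_mul, hux]
    rw [hc_def, hI_def]
    linear_combination ((1 - m n) * M₂ * q₂) * hrpow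
  have hc_nonpos : c ≤ 0 := by rw [hc_def, mul_comm]; exact hmderiv n
  have hw := hm01 n
  have hP : 0 < n ^ q₂ := Real.rpow_pos_of_pos hn q₂
  rw [hFbar t x, ← hn_def, hgrad]
  clear hFB hA hB hFBfun h1c h3 hF' hmd hu hux
  clear hFmeas hFdiff hH1 hH2 hdF
  clear_value n u I c
  rcases le_or_gt n δ with hcase | hcase
  · -- inside the ball: use H1 and H2
    obtain ⟨hF_lb, hF_ub⟩ := h1 x (hn_def ▸ hcase)
    obtain ⟨hβF, hβFI⟩ := h2 x (hn_def ▸ hcase)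
    rw [hgradF] at hβFI
    rw [← hn_def] at hF_lb hF_ub
    have hQ : 0 < n ^ q₁ := Real.rpow_pos_of_pos hn q₁
    have hFpos : 0 < F t x := lt_of_lt_of_le (by positivity) hF_lb
    constructor
    · have : 0 < m n * F t x + (1 - m n) * M₂ * n ^ q₂ := by nlinarith [hw.1, hw.2]
      positivity
    · have t0 : 0 ≤ c * (F t x - M₂ * n ^ q₂) := by
        have h' := mul_nonneg (neg_nonneg.mpr hc_nonpos) (sub_nonneg.mpr hF_ub)
        have e : (-c) * (M₂ * n ^ q₂ - F t x) = c * (F t x - M₂ * n ^ q₂) := by ring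
        rw [e] at h'; exact h'
      have t1 : m n * (θ * F t x) ≤ m n * I := by
        apply mul_le_mul_of_nonneg_left _ hw.1
        calc θ * F t x ≤ β * F t x := mul_le_mul_of_nonneg_right hθβ hFpos.le
          _ ≤ I := hβFI
      have t2 : θ * ((1 - m n) * M₂ * n ^ q₂) ≤ q₂ * ((1 - m n) * M₂ * n ^ q₂) := by
        apply mul_le_mul_of_nonneg_right hθq₂
        exact mul_nonneg (mul_nonneg (by linarith [hw.2]) hM₂.le) hP.le
      linarith [t0, t1, t2]
  · -- outside the ball: m vanishes near n
    have hmn : m n = 0 := hm0 n (by rw [abs_of_pos hn]; linarith)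
    have hmd0 : deriv m n = 0 := by
      have hev : m =ᶠ[nhds n] fun _ => (0:ℝ) := by
        filter_upwards [Ioi_mem_nhds hcase] with s hs
        exact hm0 s (by rw [abs_of_pos (lt_trans hδ hs)]; exact le_of_lt hs)
      rw [hev.deriv_eq, deriv_const]
    have hc0 : c = 0 := by rw [hc_def, hmd0, zero_mul]
    rw [hmn, hc0]
    have e1 : θ * (0 * F t x + (1 - 0) * M₂ * n ^ q₂) = θ * (M₂ * n ^ q₂) := by ring
    have e2 : 0 * I + 0 * (F t x - M₂ * n ^ q₂) + (1 - 0) * M₂ * q₂ * n ^ q₂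
        = q₂ * (M₂ * n ^ q₂) := by ring
    rw [e1, e2]
    exact ⟨mul_pos hθpos (mul_pos hM₂ hP),
      mul_le_mul_of_nonneg_right hθq₂ (le_of_lt (mul_pos hM₂ hP))⟩
end

section
/- Under hypothesis (H0), the modified nonlinearity satisfies |F̄(t,x)| ≤ a₀·b(t) + M₂|x|^{q₂} and |∇F̄(t,x)| ≤ (1+m₀)a₀·b(t) + M₂q₂|x|^{q₂−1} + m₀M₂|x|^{q₂} for all x ∈ ℝ^N and a.e. t ∈ [0,T], where a₀ = max_{s∈[0,δ]} a(s) and m₀ = max_{s∈[δ/2,δ]} |m'(s)|. -/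
open MeasureTheory Set Real

set_option maxHeartbeats 1000000 in
/-- Under hypothesis (H0), the modified nonlinearity satisfies
`|F̄(t,x)| ≤ a₀·b(t) + M₂|x|^{q₂}` and
`|∇F̄(t,x)| ≤ (1+m₀)a₀·b(t) + M₂q₂|x|^{q₂−1} + m₀M₂|x|^{q₂}`
for all `x ∈ ℝ^N` and a.e. `t ∈ [0,T]`, where `a₀ = max_{s∈[0,δ]} a(s)` and
`m₀ = max_{s∈[δ/2,δ]} |m'(s)|`. -/
theorem truncated_nonlinearity_global_growth
    (T : ℝ) (hT : 0 < T) (N : ℕ) (hN : 0 < N) (p : ℕ) (hp : 1 < p)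
    (δ : ℝ) (hδ : 0 < δ)
    (F : ℝ → EuclideanSpace ℝ (Fin N) → ℝ)
    (hFdiff : ∀ᵐ t ∂(volume.restrict (Icc 0 T)), ContDiff ℝ 1 (F t))
    (hFmeas : ∀ x : EuclideanSpace ℝ (Fin N), Measurable (fun t => F t x))
    (m : ℝ → ℝ) (hm : ContDiff ℝ 1 m)
    (hm01 : ∀ s, m s ∈ Icc (0:ℝ) 1)
    (hmeven : ∀ s, m (-s) = m s)
    (hmderiv : ∀ s, s * deriv m s ≤ 0)
    (hm1 : ∀ s, |s| ≤ δ / 2 → m s = 1)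
    (hm0 : ∀ s, δ ≤ |s| → m s = 0)
    (q₂ M₂ : ℝ) (hq₂ : 1 < q₂) (hM₂ : 0 < M₂)
    (Fbar : ℝ → EuclideanSpace ℝ (Fin N) → ℝ)
    (hFbar : ∀ t x, Fbar t x = m ‖x‖ * F t x + (1 - m ‖x‖) * M₂ * ‖x‖ ^ q₂)
    -- (H0): a ∈ C(ℝ⁺,ℝ⁺), b ∈ L¹([0,T];ℝ⁺) controlling F and ∇F for |x| ≤ δ
    (a : ℝ → ℝ) (ha : ContinuousOn a (Ici 0)) (ha0 : ∀ s ∈ Ici (0:ℝ), 0 ≤ a s)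
    (b : ℝ → ℝ) (hb : IntegrableOn b (Icc 0 T)) (hb0 : ∀ᵐ t ∂(volume.restrict (Icc 0 T)), 0 ≤ b t)
    (hH0 : ∀ᵐ t ∂(volume.restrict (Icc 0 T)),
      ∀ x : EuclideanSpace ℝ (Fin N), ‖x‖ ≤ δ →
        |F t x| ≤ a ‖x‖ * b t ∧ ‖gradient (F t) x‖ ≤ a ‖x‖ * b t)
    (a₀ : ℝ) (ha₀ : IsGreatest (a '' Icc 0 δ) a₀)
    (m₀ : ℝ) (hm₀ : IsGreatest ((fun s => |deriv m s|) '' Icc (δ / 2) δ) m₀) :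
    ∀ᵐ t ∂(volume.restrict (Icc 0 T)),
      ∀ x : EuclideanSpace ℝ (Fin N),
        |Fbar t x| ≤ a₀ * b t + M₂ * ‖x‖ ^ q₂ ∧
        ‖gradient (Fbar t) x‖ ≤
          (1 + m₀) * a₀ * b t + M₂ * q₂ * ‖x‖ ^ (q₂ - 1) + m₀ * M₂ * ‖x‖ ^ q₂ := by
  classical
  have ha₀0 : 0 ≤ a₀ := by
    obtain ⟨s, hs, rfl⟩ := ha₀.1
    exact ha0 s hs.1
  have hm₀0 : 0 ≤ m₀ := by
    obtain ⟨s, hs, rfl⟩ := hm₀.1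
    exact abs_nonneg _
  have haa : ∀ s : ℝ, 0 ≤ s → s ≤ δ → a s ≤ a₀ := fun s hs hs' => ha₀.2 ⟨s, ⟨hs, hs'⟩, rfl⟩
  -- deriv m vanishes outside [δ/2, δ]
  have hmdlt : ∀ s : ℝ, |s| < δ / 2 → deriv m s = 0 := by
    intro s hs
    have hev : m =ᶠ[nhds s] fun _ => (1:ℝ) := by
      have hopen : ∀ᶠ u in nhds s, |u| < δ / 2 :=
        (isOpen_lt continuous_abs continuous_const).mem_nhds hs
      filter_upwards [hopen] with u hu
      exact hm1 u hu.le
    rw [hev.deriv_eq, deriv_const]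
  have hmdgt : ∀ s : ℝ, δ < |s| → deriv m s = 0 := by
    intro s hs
    have hev : m =ᶠ[nhds s] fun _ => (0:ℝ) := by
      have hopen : ∀ᶠ u in nhds s, δ < |u| :=
        (isOpen_lt continuous_const continuous_abs).mem_nhds hs
      filter_upwards [hopen] with u hu
      exact hm0 u hu.le
    rw [hev.deriv_eq, deriv_const]
  have hmd : ∀ s : ℝ, 0 ≤ s → |deriv m s| ≤ m₀ := by
    intro s hs0
    rcases lt_or_ge s (δ / 2) with h | h
    · rw [hmdlt s (by rwa [abs_of_nonneg hs0])]
      simpa using hm₀0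
    rcases le_or_gt s δ with h' | h'
    · exact hm₀.2 ⟨s, ⟨h, h'⟩, rfl⟩
    · rw [hmdgt s (by rwa [abs_of_nonneg hs0])]
      simpa using hm₀0
  have hq₂0 : (0:ℝ) < q₂ := lt_trans one_pos hq₂
  filter_upwards [hFdiff, hb0, hH0] with t hFt hbt hH0t
  have hA0 : 0 ≤ a₀ * b t := mul_nonneg ha₀0 hbt
  intro x
  obtain ⟨hmx0, hmx1⟩ := hm01 ‖x‖
  have hrq : (0:ℝ) ≤ ‖x‖ ^ q₂ := Real.rpow_nonneg (norm_nonneg x) q₂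
  have hrq1 : (0:ℝ) ≤ ‖x‖ ^ (q₂ - 1) := Real.rpow_nonneg (norm_nonneg x) (q₂ - 1)
  constructor
  · -- bound on |Fbar|
    rcases le_or_gt ‖x‖ δ with hxδ | hxδ
    · have hFle : |F t x| ≤ a₀ * b t :=
        le_trans (hH0t x hxδ).1
          (mul_le_mul_of_nonneg_right (haa _ (norm_nonneg x) hxδ) hbt)
      have h1 : |Fbar t x| ≤ m ‖x‖ * |F t x| + (1 - m ‖x‖) * (M₂ * ‖x‖ ^ q₂) := by
        rw [hFbar]
        calc |m ‖x‖ * F t x + (1 - m ‖x‖) * M₂ * ‖x‖ ^ q₂|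
            ≤ |m ‖x‖ * F t x| + |(1 - m ‖x‖) * M₂ * ‖x‖ ^ q₂| := abs_add_le _ _
          _ = m ‖x‖ * |F t x| + (1 - m ‖x‖) * (M₂ * ‖x‖ ^ q₂) := by
              rw [abs_mul, abs_of_nonneg hmx0, abs_mul, abs_mul,
                abs_of_nonneg (by linarith : (0:ℝ) ≤ 1 - m ‖x‖),
                abs_of_nonneg hM₂.le, abs_of_nonneg hrq, mul_assoc]
      have h2 : m ‖x‖ * |F t x| ≤ a₀ * b t := by
        nlinarith [abs_nonneg (F t x)]
      have h3 : (1 - m ‖x‖) * (M₂ * ‖x‖ ^ q₂) ≤ M₂ * ‖x‖ ^ q₂ := by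
        nlinarith [mul_nonneg hM₂.le hrq]
      linarith
    · have hmz : m ‖x‖ = 0 := hm0 _ (by rw [abs_of_nonneg (norm_nonneg x)]; exact hxδ.le)
      rw [hFbar, hmz]
      have : |(0:ℝ) * F t x + (1 - 0) * M₂ * ‖x‖ ^ q₂| = M₂ * ‖x‖ ^ q₂ := by
        rw [zero_mul, zero_add, sub_zero, one_mul, abs_of_nonneg (mul_nonneg hM₂.le hrq)]
      rw [this]
      linarith
  · -- bound on the gradient
    rcases eq_or_ne x 0 with rfl | hx
    · -- x = 0 : Fbar agrees with F near 0
      have hloc : Fbar t =ᶠ[nhds (0 : EuclideanSpace ℝ (Fin N))] F t := by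
        have hb' : ∀ᶠ y in nhds (0 : EuclideanSpace ℝ (Fin N)), ‖y‖ < δ / 2 := by
          have := Metric.ball_mem_nhds (0 : EuclideanSpace ℝ (Fin N)) (by linarith : (0:ℝ) < δ / 2)
          filter_upwards [this] with y hy
          simpa [mem_ball_zero_iff] using hy
        filter_upwards [hb'] with y hy
        rw [hFbar, hm1 _ (by rw [abs_of_nonneg (norm_nonneg y)]; exact hy.le)]
        ring
      have hge : gradient (Fbar t) 0 = gradient (F t) 0 := hloc.gradient_eq
      have hF0 : ‖gradient (F t) 0‖ ≤ a₀ * b t := by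
        have h := (hH0t 0 (by simp [hδ.le])).2
        rw [norm_zero] at h
        exact le_trans h (mul_le_mul_of_nonneg_right (haa 0 le_rfl hδ.le) hbt)
      rw [hge]
      have hz1 : ‖(0 : EuclideanSpace ℝ (Fin N))‖ ^ (q₂ - 1) = 0 := by
        rw [norm_zero, Real.zero_rpow (sub_ne_zero.mpr (ne_of_gt hq₂))]
      have hz2 : ‖(0 : EuclideanSpace ℝ (Fin N))‖ ^ q₂ = 0 := by
        rw [norm_zero, Real.zero_rpow (ne_of_gt hq₂0)]
      rw [hz1, hz2]
      nlinarith
    · -- x ≠ 0 : compute the derivative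
      have hxn : (0:ℝ) < ‖x‖ := norm_pos_iff.2 hx
      have hnormd : DifferentiableAt ℝ (fun y : EuclideanSpace ℝ (Fin N) => ‖y‖) x :=
        (contDiffAt_norm ℝ hx).differentiableAt one_ne_zero
      set φ := fderiv ℝ (fun y : EuclideanSpace ℝ (Fin N) => ‖y‖) x with hφdef
      have hφ : HasFDerivAt (fun y : EuclideanSpace ℝ (Fin N) => ‖y‖) φ x :=
        hnormd.hasFDerivAt
      have hφn : ‖φ‖ ≤ 1 := by
        have := norm_fderiv_le_of_lipschitz ℝ
          (lipschitzWith_one_norm (E := EuclideanSpace ℝ (Fin N))) (x₀ := x)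
        simpa using this
      have hmd' : HasDerivAt m (deriv m ‖x‖) ‖x‖ :=
        ((hm.differentiable one_ne_zero) ‖x‖).hasDerivAt
      have hg1 : HasFDerivAt (fun y : EuclideanSpace ℝ (Fin N) => m ‖y‖)
          (deriv m ‖x‖ • φ) x := HasDerivAt.comp_hasFDerivAt x hmd' hφ
      have hr : HasDerivAt (fun u : ℝ => u ^ q₂) (q₂ * ‖x‖ ^ (q₂ - 1)) ‖x‖ :=
        Real.hasDerivAt_rpow_const (Or.inl (ne_of_gt hxn))
      have hg2 : HasFDerivAt (fun y : EuclideanSpace ℝ (Fin N) => ‖y‖ ^ q₂)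
          ((q₂ * ‖x‖ ^ (q₂ - 1)) • φ) x := HasDerivAt.comp_hasFDerivAt x hr hφ
      have hFd : HasFDerivAt (F t) (fderiv ℝ (F t) x) x :=
        ((hFt.differentiable one_ne_zero) x).hasFDerivAt
      set DF := fderiv ℝ (F t) x with hDFdef
      have h1 : HasFDerivAt (fun y : EuclideanSpace ℝ (Fin N) => m ‖y‖ * F t y)
          (m ‖x‖ • DF + F t x • (deriv m ‖x‖ • φ)) x := hg1.mul hFd
      have hc : HasFDerivAt (fun y : EuclideanSpace ℝ (Fin N) => (1 - m ‖y‖) * M₂)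
          (M₂ • ((0 : EuclideanSpace ℝ (Fin N) →L[ℝ] ℝ) - deriv m ‖x‖ • φ)) x :=
        ((hasFDerivAt_const (1:ℝ) x).sub hg1).mul_const M₂
      have h2 : HasFDerivAt (fun y : EuclideanSpace ℝ (Fin N) => (1 - m ‖y‖) * M₂ * ‖y‖ ^ q₂)
          (((1 - m ‖x‖) * M₂) • ((q₂ * ‖x‖ ^ (q₂ - 1)) • φ) +
            (‖x‖ ^ q₂) • (M₂ • ((0 : EuclideanSpace ℝ (Fin N) →L[ℝ] ℝ) - deriv m ‖x‖ • φ))) x :=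
        hc.mul hg2
      have heq : Fbar t = fun y : EuclideanSpace ℝ (Fin N) =>
          m ‖y‖ * F t y + (1 - m ‖y‖) * M₂ * ‖y‖ ^ q₂ := funext (hFbar t)
      have hDtot : HasFDerivAt (Fbar t)
          ((m ‖x‖ • DF + F t x • (deriv m ‖x‖ • φ)) +
            (((1 - m ‖x‖) * M₂) • ((q₂ * ‖x‖ ^ (q₂ - 1)) • φ) +
              (‖x‖ ^ q₂) • (M₂ • ((0 : EuclideanSpace ℝ (Fin N) →L[ℝ] ℝ) - deriv m ‖x‖ • φ)))) x := by
        rw [heq]; exact h1.add h2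
      have hgrad := hasFDerivAt_iff_hasGradientAt.1 hDtot
      rw [hgrad.gradient, LinearIsometryEquiv.norm_map]
      -- relate ‖DF‖ to the gradient of F
      have hgF : HasGradientAt (F t) (gradient (F t) x) x :=
        ((hFt.differentiable one_ne_zero) x).hasGradientAt
      have hDFn : ‖DF‖ = ‖gradient (F t) x‖ := by
        rw [hDFdef, hgF.hasFDerivAt.fderiv, LinearIsometryEquiv.norm_map]
      -- bound the four pieces
      have hdm : |deriv m ‖x‖| ≤ m₀ := hmd _ (norm_nonneg x)
      have hTA : ‖m ‖x‖ • DF‖ ≤ a₀ * b t := by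
        rcases le_or_gt ‖x‖ δ with hxδ | hxδ
        · have hDFle : ‖DF‖ ≤ a₀ * b t := by
            rw [hDFn]
            exact le_trans (hH0t x hxδ).2
              (mul_le_mul_of_nonneg_right (haa _ (norm_nonneg x) hxδ) hbt)
          rw [norm_smul, Real.norm_eq_abs, abs_of_nonneg hmx0]
          nlinarith [norm_nonneg DF]
        · have : m ‖x‖ = 0 := hm0 _ (by rw [abs_of_nonneg (norm_nonneg x)]; exact hxδ.le)
          rw [this, zero_smul, norm_zero]
          exact hA0
      have hTB : ‖F t x • (deriv m ‖x‖ • φ)‖ ≤ m₀ * (a₀ * b t) := by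
        rw [norm_smul, norm_smul, Real.norm_eq_abs, Real.norm_eq_abs]
        rcases le_or_gt ‖x‖ δ with hxδ | hxδ
        · have hFle : |F t x| ≤ a₀ * b t :=
            le_trans (hH0t x hxδ).1
              (mul_le_mul_of_nonneg_right (haa _ (norm_nonneg x) hxδ) hbt)
          have e1 : |deriv m ‖x‖| * ‖φ‖ ≤ m₀ :=
            le_trans (mul_le_of_le_one_right (abs_nonneg _) hφn) hdm
          have e2 := mul_le_mul hFle e1 (mul_nonneg (abs_nonneg _) (norm_nonneg _)) hA0
          linarith
        · rw [hmdgt _ (by rw [abs_of_nonneg (norm_nonneg x)]; exact hxδ)]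
          simp only [abs_zero, zero_mul, mul_zero]
          exact mul_nonneg hm₀0 hA0
      have hTC : ‖((1 - m ‖x‖) * M₂) • ((q₂ * ‖x‖ ^ (q₂ - 1)) • φ)‖ ≤ M₂ * q₂ * ‖x‖ ^ (q₂ - 1) := by
        rw [norm_smul, norm_smul, Real.norm_eq_abs, Real.norm_eq_abs,
          abs_of_nonneg (mul_nonneg (by linarith : (0:ℝ) ≤ 1 - m ‖x‖) hM₂.le),
          abs_of_nonneg (mul_nonneg hq₂0.le hrq1)]
        have e1 : q₂ * ‖x‖ ^ (q₂ - 1) * ‖φ‖ ≤ q₂ * ‖x‖ ^ (q₂ - 1) :=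
          mul_le_of_le_one_right (mul_nonneg hq₂0.le hrq1) hφn
        have e2 : (1 - m ‖x‖) * M₂ ≤ 1 * M₂ := mul_le_mul_of_nonneg_right (by linarith) hM₂.le
        have e3 := mul_le_mul e2 e1 (mul_nonneg (mul_nonneg hq₂0.le hrq1) (norm_nonneg φ))
          (by positivity)
        nlinarith [e3]
      have hTD : ‖(‖x‖ ^ q₂) • (M₂ • ((0 : EuclideanSpace ℝ (Fin N) →L[ℝ] ℝ) - deriv m ‖x‖ • φ))‖
          ≤ m₀ * M₂ * ‖x‖ ^ q₂ := by
        have e1 : |deriv m ‖x‖| * ‖φ‖ ≤ m₀ :=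
          le_trans (mul_le_of_le_one_right (abs_nonneg _) hφn) hdm
        rw [zero_sub,
          norm_smul (‖x‖ ^ q₂) (M₂ • -(deriv m ‖x‖ • φ)),
          norm_smul M₂ (-(deriv m ‖x‖ • φ)), norm_neg,
          norm_smul (deriv m ‖x‖) φ, Real.norm_eq_abs, Real.norm_eq_abs, Real.norm_eq_abs,
          abs_of_nonneg hrq, abs_of_nonneg hM₂.le]
        have e2 := mul_le_mul_of_nonneg_left (mul_le_mul_of_nonneg_left e1 hM₂.le) hrq
        nlinarith [e2]
      calc ‖(m ‖x‖ • DF + F t x • (deriv m ‖x‖ • φ)) +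
            (((1 - m ‖x‖) * M₂) • ((q₂ * ‖x‖ ^ (q₂ - 1)) • φ) +
              (‖x‖ ^ q₂) • (M₂ • ((0 : EuclideanSpace ℝ (Fin N) →L[ℝ] ℝ) - deriv m ‖x‖ • φ)))‖
          ≤ (‖m ‖x‖ • DF‖ + ‖F t x • (deriv m ‖x‖ • φ)‖) +
            (‖((1 - m ‖x‖) * M₂) • ((q₂ * ‖x‖ ^ (q₂ - 1)) • φ)‖ +
              ‖(‖x‖ ^ q₂) • (M₂ • ((0 : EuclideanSpace ℝ (Fin N) →L[ℝ] ℝ) - deriv m ‖x‖ • φ))‖) :=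
            le_trans (norm_add_le _ _) (add_le_add (norm_add_le _ _) (norm_add_le _ _))
        _ ≤ (a₀ * b t + m₀ * (a₀ * b t)) + (M₂ * q₂ * ‖x‖ ^ (q₂ - 1) + m₀ * M₂ * ‖x‖ ^ q₂) :=
            add_le_add (add_le_add hTA hTB) (add_le_add hTC hTD)
        _ = (1 + m₀) * a₀ * b t + M₂ * q₂ * ‖x‖ ^ (q₂ - 1) + m₀ * M₂ * ‖x‖ ^ q₂ := by ring
end

section
/- Let a, b, c, λ > 0 be reals, p > 1 an integer, and q₁ > 0 a real. If λ > (a + b·c)^{q₁(p−1)}, then the function f₁(s) = (1/(b·p²))·(a + b·c·s^p)^p − λ^{1/q₁}·c·s^p/p − a^p/(b·p²) satisfies f₁(s) < 0 for every s ∈ (0,1], and f₁(0) = 0. -/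
open Set

lemma aux_pow_sub_pow_le (x y : ℝ) (hy : 0 ≤ y) (hxy : y ≤ x) :
    ∀ n : ℕ, x ^ (n + 1) - y ^ (n + 1) ≤ (n + 1 : ℝ) * x ^ n * (x - y) := by
  intro n
  induction n with
  | zero => simp
  | succ n ih =>
    have hx : 0 ≤ x := hy.trans hxy
    have h1 : y ^ (n + 1) ≤ x ^ (n + 1) := pow_le_pow_left₀ hy hxy _
    have h2 : x * (x ^ (n + 1) - y ^ (n + 1)) ≤ x * ((n + 1 : ℝ) * x ^ n * (x - y)) :=
      mul_le_mul_of_nonneg_left ih hx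
    have h3 : x ^ (n + 2) - y ^ (n + 2)
        = x * (x ^ (n + 1) - y ^ (n + 1)) + (x - y) * y ^ (n + 1) := by ring
    have h4 : 0 ≤ (x - y) * (x ^ (n + 1) - y ^ (n + 1)) :=
      mul_nonneg (sub_nonneg.2 hxy) (sub_nonneg.2 h1)
    have h5 : x * ((n + 1 : ℝ) * x ^ n * (x - y)) = (n + 1 : ℝ) * x ^ (n + 1) * (x - y) := by
      ring
    have h6 : (x - y) * y ^ (n + 1) ≤ (x - y) * x ^ (n + 1) := by nlinarith [h4]
    have h7 : (n + 1 : ℝ) * x ^ (n + 1) * (x - y) + (x - y) * x ^ (n + 1)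
        = ((n : ℝ) + 1 + 1) * x ^ (n + 1) * (x - y) := by ring
    push_cast
    linarith [h2, h3, h6]

/-- If `λ > (a + b·c)^{q₁(p−1)}`, then
`f₁(s) = (1/(bp²))(a + b·c·s^p)^p − λ^{1/q₁}·c·s^p/p − a^p/(bp²)` satisfies `f₁(s) < 0` for
every `s ∈ (0,1]`, and `f₁(0) = 0`. -/
theorem mountain_pass_level_auxiliary_negative
    (a b c lam : ℝ) (ha : 0 < a) (hb : 0 < b) (hc : 0 < c) (hlam : 0 < lam)
    (p : ℕ) (hp : 1 < p) (q₁ : ℝ) (hq₁ : 0 < q₁)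
    (hlarge : (a + b * c) ^ (q₁ * ((p : ℝ) - 1)) < lam)
    (f₁ : ℝ → ℝ)
    (hf₁ : ∀ s, f₁ s = 1 / (b * (p : ℝ) ^ 2) * (a + b * c * s ^ p) ^ p
        - lam ^ (1 / q₁) * c * s ^ p / (p : ℝ) - a ^ p / (b * (p : ℝ) ^ 2)) :
    f₁ 0 = 0 ∧ ∀ s ∈ Ioc (0:ℝ) 1, f₁ s < 0 := by
  have hA : 0 < a + b * c := by positivity
  obtain ⟨q, rfl⟩ : ∃ q, p = q + 1 := ⟨p - 1, by omega⟩
  have hq : 1 ≤ q := by omega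
  -- the rpow threshold inequality
  have hAlt : (a + b * c) ^ q < lam ^ (1 / q₁) := by
    have h1 : ((a + b * c) ^ (q₁ * ((q + 1 : ℕ) : ℝ) - q₁)) ^ (1 / q₁) < lam ^ (1 / q₁) := by
      apply Real.rpow_lt_rpow (by positivity) _ (by positivity)
      have : q₁ * (((q + 1 : ℕ) : ℝ) - 1) = q₁ * ((q + 1 : ℕ) : ℝ) - q₁ := by ring
      rw [← this]; exact hlarge
    calc (a + b * c) ^ q = (a + b * c) ^ ((q : ℝ)) := by
          rw [Real.rpow_natCast]
      _ = ((a + b * c) ^ (q₁ * ((q + 1 : ℕ) : ℝ) - q₁)) ^ (1 / q₁) := by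
          rw [← Real.rpow_mul hA.le]
          congr 1
          field_simp
          push_cast
          ring
      _ < lam ^ (1 / q₁) := h1
  set L := lam ^ (1 / q₁) with hL
  have hLpos : 0 < L := Real.rpow_pos_of_pos hlam _
  constructor
  · rw [hf₁ 0]
    have : (0:ℝ) ^ (q + 1) = 0 := zero_pow (Nat.succ_ne_zero q)
    rw [this]
    ring
  · rintro s ⟨hs0, hs1⟩
    set x := a + b * c * s ^ (q + 1) with hx
    have hsp : 0 < s ^ (q + 1) := by positivity
    have hsp1 : s ^ (q + 1) ≤ 1 := pow_le_one₀ hs0.le hs1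
    have hax : a ≤ x := by
      rw [hx]; nlinarith [mul_pos (mul_pos hb hc) hsp]
    have hxA : x ≤ a + b * c := by
      rw [hx]; nlinarith [mul_pos hb hc]
    have hxq : x ^ q ≤ (a + b * c) ^ q :=
      pow_le_pow_left₀ (by linarith) hxA _
    have hxL : x ^ q < L := lt_of_le_of_lt hxq hAlt
    have hmvt : x ^ (q + 1) - a ^ (q + 1) ≤ (q + 1 : ℝ) * x ^ q * (x - a) :=
      aux_pow_sub_pow_le x a ha.le hax q
    have hxa : x - a = b * c * s ^ (q + 1) := by rw [hx]; ring
    have hpR : (0:ℝ) < ((q + 1 : ℕ) : ℝ) := by positivity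
    have key : x ^ (q + 1) - a ^ (q + 1) - L * c * s ^ (q + 1) * (b * ((q + 1 : ℕ) : ℝ)) < 0 := by
      have hprod : (q + 1 : ℝ) * x ^ q * (b * c * s ^ (q + 1))
          < (q + 1 : ℝ) * L * (b * c * s ^ (q + 1)) := by
        have hpos : 0 < (q + 1 : ℝ) * (b * c * s ^ (q + 1)) := by positivity
        nlinarith
      rw [hxa] at hmvt
      push_cast
      nlinarith
    have heq : f₁ s = (x ^ (q + 1) - a ^ (q + 1)
        - L * c * s ^ (q + 1) * (b * ((q + 1 : ℕ) : ℝ))) / (b * ((q + 1 : ℕ) : ℝ) ^ 2) := by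
      rw [hf₁ s, hx]
      field_simp
      ring
    rw [heq]
    exact div_neg_of_neg_of_pos key (by positivity)
end

section
/- Let a, b > 0 be reals, p > 1 an integer, and θ > p² a real. Then for every real x ≥ 0, (a + b·x)^{p−1}·((a + b·x)/(b·p²) − x/θ) − a^p/(b·p²) ≥ a^{p−1}·(1/p² − 1/θ)·x. -/
/-- For reals `a, b > 0`, an integer `p > 1` and a real `θ > p²`, every
`x ≥ 0` satisfies
`(a + bx)^{p−1}((a + bx)/(bp²) − x/θ) − a^p/(bp²) ≥ a^{p−1}(1/p² − 1/θ)x`. -/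
theorem palais_smale_coercivity_estimate
    (a b : ℝ) (ha : 0 < a) (hb : 0 < b) (p : ℕ) (hp : 1 < p)
    (θ : ℝ) (hθ : ((p : ℝ)) ^ 2 < θ) :
    ∀ x : ℝ, 0 ≤ x →
      a ^ (p - 1) * (1 / (p : ℝ) ^ 2 - 1 / θ) * x ≤
        (a + b * x) ^ (p - 1) * ((a + b * x) / (b * (p : ℝ) ^ 2) - x / θ)
          - a ^ p / (b * (p : ℝ) ^ 2) := by
  intro x hx
  obtain ⟨n, rfl⟩ : ∃ n, p = n + 1 := ⟨p - 1, by omega⟩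
  have hn : 0 < n := by omega
  set c : ℝ := a + b * x with hc
  have hca : a ≤ c := by nlinarith
  have hc0 : 0 < c := lt_of_lt_of_le ha hca
  set q : ℝ := ((n + 1 : ℕ) : ℝ) ^ 2 with hqdef
  have hq : (0 : ℝ) < q := by positivity
  have hθ0 : (0 : ℝ) < θ := lt_trans hq hθ
  set S : ℝ := ∑ i ∈ Finset.range (n + 1), c ^ i * a ^ (n + 1 - 1 - i) with hSdef
  have hgeom : S * (c - a) = c ^ (n + 1) - a ^ (n + 1) := geom_sum₂_mul c a (n + 1)
  have hx2 : c ^ (n + 1) - a ^ (n + 1) = b * x * S := by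
    rw [← hgeom, hc]; ring
  have hS1 : c ^ n ≤ S := by
    have h := Finset.single_le_sum (f := fun i => c ^ i * a ^ (n + 1 - 1 - i))
      (fun i _ => by positivity) (Finset.mem_range.mpr (Nat.lt_succ_self n))
    simpa [hSdef] using h
  have hS2 : a ^ n ≤ S := by
    have h := Finset.single_le_sum (f := fun i => c ^ i * a ^ (n + 1 - 1 - i))
      (fun i _ => by positivity) (Finset.mem_range.mpr (Nat.succ_pos n))
    simpa [hSdef] using h
  have hmono : a ^ n ≤ c ^ n := pow_le_pow_left₀ ha.le hca n
  simp only [Nat.add_sub_cancel]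
  have hbq : (0 : ℝ) < b * q := by positivity
  have hE : c ^ n * (c / (b * q) - x / θ) - a ^ (n + 1) / (b * q)
      - a ^ n * (1 / q - 1 / θ) * x
      = (θ * (c ^ (n + 1) - a ^ (n + 1)) - b * q * c ^ n * x
          - a ^ n * (θ - q) * b * x) / (b * q * θ) := by
    field_simp
    ring
  rw [← sub_nonneg, hE]
  apply div_nonneg _ (by positivity)
  rw [hx2]
  nlinarith [mul_nonneg hx (sub_nonneg.mpr hS1), mul_nonneg hx (sub_nonneg.mpr hmono),
    mul_nonneg (mul_nonneg hx (sub_nonneg.mpr hmono)) (sub_nonneg.mpr hθ.le),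
    mul_nonneg (mul_nonneg hx (sub_nonneg.mpr hS1)) hθ0.le]
end
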